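/- Let 0 < q < 1, let λ be a nonzero real number, and let m, ν be real numbers with ν > −1 and m + ν > 0. Then for all x > 0, the q-derivative at x of the function G(x) := ( x^{m+1} / (−x²λ²(1−q)²; q²)_∞ )·( ((q^{−m}[m]_q − q^{−ν}[ν]_q)/x)·J_ν^{(2)}(λx | q²) + q^ν·λ·J_{ν+1}^{(2)}(λx | q²) ) equals ( x^{m+1} / (−x²λ²(1−q)²; q²)_∞ )·( q^m·λ² + ( q^{−m}[m]_q² − q^{−ν}[ν]_q² )/x² )·J_ν^{(2)}(λx | q²). -/

import Mathlib

/-- The Jackson `q`-derivative `(D_q f)(x) = (f(x) - f(qx)) / ((1-q)x)`. -/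
noncomputable def qDeriv (q : ℝ) (f : ℝ → ℝ) (x : ℝ) : ℝ :=
  (f x - f (q * x)) / ((1 - q) * x)

/-- The finite q-shifted factorial `(z; q)_n`. -/
noncomputable def qPoch (z q : ℝ) (n : ℕ) : ℝ :=
  ∏ k ∈ Finset.range n, (1 - z * q ^ k)

/-- The infinite q-shifted factorial `(z; q)_∞`. -/
noncomputable def qPochInf (z q : ℝ) : ℝ :=
  ∏' k : ℕ, (1 - z * q ^ k)

/-- The q-bracket `[ν]_q = (1 - q^ν)/(1 - q)` for a real `ν` (rpow). -/
noncomputable def qBracket (q ν : ℝ) : ℝ := (1 - q ^ ν) / (1 - q)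

/-- The second Jackson q-Bessel function in the notation
`J_ν^{(2)}(λx | q²) = J_ν^{(2)}(2λx(1−q); q²)`. -/
noncomputable def J2 (q ν lam x : ℝ) : ℝ :=
  (qPochInf (q ^ (2 * ν + 2)) (q ^ 2) / qPochInf (q ^ 2) (q ^ 2)) *
    ∑' n : ℕ, ((-1 : ℝ) ^ n * q ^ (2 * (n : ℝ) * ((n : ℝ) + ν)) *
        (lam * x * (1 - q)) ^ (2 * (n : ℝ) + ν)) /
      (qPoch (q ^ 2) (q ^ 2) n *
        ∏ j ∈ Finset.range n, (1 - q ^ (2 * ν + 2 + 2 * (j : ℝ))))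

section poch
variable {z s : ℝ}

lemma summable_log_aux (hz : z < 1) (hs0 : 0 ≤ s) (hs1 : s < 1) :
    Summable (fun k : ℕ => Real.log (1 - z * s ^ k)) := by
  have hfac : ∀ k : ℕ, z * s ^ k < 1 := by
    intro k
    rcases le_or_gt z 0 with h | h
    · exact lt_of_le_of_lt (mul_nonpos_of_nonpos_of_nonneg h (pow_nonneg hs0 k)) one_pos
    · calc z * s ^ k ≤ z * 1 := by
            exact mul_le_mul_of_nonneg_left (pow_le_one₀ hs0 hs1.le) h.le
        _ < 1 := by linarith
  set C : ℝ := |z| / (1 - max z 0) with hC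
  have hmax : max z 0 < 1 := by rcases le_total z 0 with h|h <;> simp [max_eq_left, max_eq_right, h, hz] <;> linarith
  have hCge : 0 < 1 - max z 0 := by linarith
  apply Summable.of_norm_bounded
    ((summable_geometric_of_lt_one hs0 hs1).mul_left C)
  intro k
  have hpk : 0 ≤ s ^ k := pow_nonneg hs0 k
  have hpk1 : s ^ k ≤ 1 := pow_le_one₀ hs0 hs1.le
  rcases le_or_gt z 0 with h | h
  · -- factor ≥ 1
    have h1 : (1:ℝ) ≤ 1 - z * s ^ k := by nlinarith
    have hlog : Real.log (1 - z * s ^ k) ≤ (1 - z * s ^ k) - 1 :=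
      Real.log_le_sub_one_of_pos (by linarith)
    have hlognn : 0 ≤ Real.log (1 - z * s ^ k) := Real.log_nonneg h1
    rw [Real.norm_eq_abs, abs_of_nonneg hlognn]
    have : (1 - z * s ^ k) - 1 = -z * s ^ k := by ring
    rw [this] at hlog
    refine hlog.trans ?_
    have hmz0 : max z 0 = 0 := max_eq_right h
    rw [hC, hmz0]
    have hza : -z ≤ |z| := neg_le_abs z
    have : |z| / (1 - 0) = |z| := by ring
    rw [this]
    nlinarith [abs_nonneg z]
  · -- 0 < z < 1, factor in (1-z, 1]
    have ht0 : 0 < 1 - z * s ^ k := by linarith [hfac k]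
    have ht1 : 1 - z * s ^ k ≤ 1 := by nlinarith
    have hlog : Real.log (1 - z * s ^ k) ≤ 0 := Real.log_nonpos ht0.le ht1
    rw [Real.norm_eq_abs, abs_of_nonpos hlog]
    have hinv : -Real.log (1 - z * s ^ k) = Real.log (1 - z * s ^ k)⁻¹ := by
      rw [Real.log_inv]
    rw [hinv]
    have h2 : Real.log (1 - z * s ^ k)⁻¹ ≤ (1 - z * s ^ k)⁻¹ - 1 :=
      Real.log_le_sub_one_of_pos (by positivity)
    refine h2.trans ?_
    have hmz : max z 0 = z := max_eq_left h.le
    have hzk : z * s ^ k ≤ z := by nlinarith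
    have hge : 1 - z ≤ 1 - z * s ^ k := by linarith
    have h3 : (1 - z * s ^ k)⁻¹ - 1 = (z * s ^ k) / (1 - z * s ^ k) := by
      field_simp
      ring
    rw [h3, hC, hmz, abs_of_pos h]
    have : z / (1 - z) * s ^ k = z * s ^ k / (1 - z) := by ring
    rw [this]
    exact div_le_div_of_nonneg_left (by positivity) (by linarith) (by linarith)
end poch

section poch2
variable {z s : ℝ}

lemma factor_pos (hz : z < 1) (hs0 : 0 ≤ s) (hs1 : s < 1) (k : ℕ) :
    0 < 1 - z * s ^ k := by
  rcases le_or_gt z 0 with h | h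
  · nlinarith [pow_nonneg hs0 k]
  · nlinarith [pow_nonneg hs0 k, pow_le_one₀ hs0 hs1.le (n := k)]

lemma multipliable_qPochInf (hz : z < 1) (hs0 : 0 ≤ s) (hs1 : s < 1) :
    Multipliable (fun k : ℕ => 1 - z * s ^ k) := by
  have := Real.multipliable_of_summable_log
    (fun k => factor_pos hz hs0 hs1 k)
    (summable_log_aux hz hs0 hs1)
  exact this

lemma qPochInf_pos (hz : z < 1) (hs0 : 0 ≤ s) (hs1 : s < 1) :
    0 < qPochInf z s := by
  have h2 := Real.rexp_tsum_eq_tprod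
    (fun k => factor_pos hz hs0 hs1 k)
    (summable_log_aux hz hs0 hs1)
  rw [qPochInf, ← h2]
  exact Real.exp_pos _

lemma qPochInf_shift (hz : z < 1) (hs0 : 0 ≤ s) (hs1 : s < 1) :
    qPochInf z s = (1 - z) * qPochInf (z * s) s := by
  have hzs : z * s < 1 := by
    rcases le_or_gt z 0 with h | h
    · nlinarith
    · nlinarith
  have hm : Multipliable (fun n : ℕ => 1 - z * s ^ (n + 1)) := by
    have := multipliable_qPochInf hzs hs0 hs1
    apply this.congr
    intro k
    rw [pow_succ']
    ring
  rw [qPochInf, tprod_eq_zero_mul' (f := fun k : ℕ => 1 - z * s ^ k) hm]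
  congr 1
  · simp
  · rw [qPochInf]
    apply tprod_congr
    intro k
    rw [pow_succ']
    ring
end poch2


noncomputable def cJ (q ν : ℝ) (n : ℕ) : ℝ :=
  ((-1 : ℝ) ^ n * q ^ (2 * (n : ℝ) * ((n : ℝ) + ν))) /
    (qPoch (q ^ 2) (q ^ 2) n * ∏ j ∈ Finset.range n, (1 - q ^ (2 * ν + 2 + 2 * (j : ℝ))))

section cJlem
variable {q ν : ℝ} (hq : 0 < q) (hq1 : q < 1) (hν : -1 < ν)

lemma rpow_two_n (hq : 0 < q) (n : ℕ) : q ^ (2 * (n : ℝ)) = ((q ^ 2) ^ n : ℝ) := by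
  rw [show (2 * (n : ℝ)) = ((2 * n : ℕ) : ℝ) by push_cast; ring, Real.rpow_natCast, pow_mul]

include hq hq1 hν

lemma W_lt_one : q ^ (2 * ν + 2) < 1 :=
  Real.rpow_lt_one hq.le hq1 (by linarith)

lemma W_pos : 0 < q ^ (2 * ν + 2) := Real.rpow_pos_of_pos hq _

lemma nufac_pos (j : ℕ) : 0 < 1 - q ^ (2 * ν + 2 + 2 * (j : ℝ)) := by
  have h1 : q ^ (2 * ν + 2 + 2 * (j : ℝ)) < 1 :=
    Real.rpow_lt_one hq.le hq1 (by linarith [Nat.cast_nonneg (α := ℝ) j])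
  linarith

lemma qPoch_sq_pos (n : ℕ) : 0 < qPoch (q ^ 2) (q ^ 2) n := by
  rw [qPoch]
  apply Finset.prod_pos
  intro k _
  have h1 : (q ^ 2 : ℝ) * (q ^ 2) ^ k ≤ q ^ 2 * 1 := by
    apply mul_le_mul_of_nonneg_left _ (by positivity)
    exact pow_le_one₀ (by positivity) (by nlinarith)
  nlinarith

lemma nuprod_pos (n : ℕ) : 0 < ∏ j ∈ Finset.range n, (1 - q ^ (2 * ν + 2 + 2 * (j : ℝ))) := by
  apply Finset.prod_pos
  intro j _
  exact nufac_pos hq hq1 hν j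

lemma cJ_zero : cJ q ν 0 = 1 := by
  simp [cJ, qPoch]

lemma cJ_succ (n : ℕ) :
    cJ q ν (n + 1) = -(q ^ (2 * ν + 2) * ((q ^ 2) ^ n : ℝ) * ((q ^ 2) ^ n : ℝ)) * cJ q ν n /
      ((1 - q ^ 2 * (q ^ 2) ^ n) * (1 - q ^ (2 * ν + 2) * ((q ^ 2) ^ n : ℝ))) := by
  have hnum : q ^ (2 * ((n : ℝ) + 1) * (((n : ℝ) + 1) + ν))
      = q ^ (2 * (n : ℝ) * ((n : ℝ) + ν)) * (q ^ (2 * ν + 2) * ((q ^ 2) ^ n : ℝ) * ((q ^ 2) ^ n : ℝ)) := by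
    have e1 : q ^ (2 * ν + 2) * ((q ^ 2) ^ n : ℝ) * ((q ^ 2) ^ n : ℝ)
        = q ^ ((2 * ν + 2) + 2 * (n : ℝ) + 2 * (n : ℝ)) := by
      rw [← rpow_two_n hq, ← Real.rpow_add hq, ← Real.rpow_add hq]
    rw [e1, ← Real.rpow_add hq]
    congr 1
    ring
  have hfac : (1 : ℝ) - q ^ (2 * ν + 2 + 2 * (n : ℝ)) = 1 - q ^ (2 * ν + 2) * ((q ^ 2) ^ n : ℝ) := by
    rw [Real.rpow_add hq, rpow_two_n hq]
  have hden1 : qPoch (q ^ 2) (q ^ 2) (n + 1) = qPoch (q ^ 2) (q ^ 2) n * (1 - q ^ 2 * (q ^ 2) ^ n) := by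
    rw [qPoch, qPoch, Finset.prod_range_succ]
  have hden2 : (∏ j ∈ Finset.range (n + 1), (1 - q ^ (2 * ν + 2 + 2 * (j : ℝ))))
      = (∏ j ∈ Finset.range n, (1 - q ^ (2 * ν + 2 + 2 * (j : ℝ)))) * (1 - q ^ (2 * ν + 2) * ((q ^ 2) ^ n : ℝ)) := by
    rw [Finset.prod_range_succ, hfac]
  have h1 : (0 : ℝ) < qPoch (q ^ 2) (q ^ 2) n := qPoch_sq_pos hq hq1 hν n
  have h2 : (0 : ℝ) < ∏ j ∈ Finset.range n, (1 - q ^ (2 * ν + 2 + 2 * (j : ℝ))) := nuprod_pos hq hq1 hν n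
  have h3 : (0 : ℝ) < 1 - q ^ 2 * (q ^ 2) ^ n := by
    have := qPoch_sq_pos hq hq1 hν 1
    nlinarith [pow_le_one₀ (show (0:ℝ) ≤ q ^ 2 by positivity) (show (q:ℝ) ^ 2 ≤ 1 by nlinarith) (n := n), sq_nonneg q]
  have h4 : (0 : ℝ) < 1 - q ^ (2 * ν + 2) * ((q ^ 2) ^ n : ℝ) := by
    rw [← hfac]; exact nufac_pos hq hq1 hν n
  rw [cJ, cJ, hden1, hden2]
  push_cast
  rw [hnum]
  field_simp
  ring
end cJlem

section cJlem2
variable {q ν : ℝ} (hq : 0 < q) (hq1 : q < 1) (hν : -1 < ν)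

include hq hq1 hν

lemma f1_pos (n : ℕ) : (0:ℝ) < 1 - q ^ 2 * (q ^ 2) ^ n := by
  nlinarith [pow_le_one₀ (show (0:ℝ) ≤ q ^ 2 by positivity) (show (q:ℝ) ^ 2 ≤ 1 by nlinarith) (n := n), sq_nonneg q]

lemma g_pos (n : ℕ) : (0:ℝ) < 1 - q ^ (2 * ν + 2) * ((q ^ 2) ^ n : ℝ) := by
  have h := nufac_pos hq hq1 hν n
  have hfac : q ^ (2 * ν + 2 + 2 * (n : ℝ)) = q ^ (2 * ν + 2) * ((q ^ 2) ^ n : ℝ) := by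
    rw [Real.rpow_add hq, rpow_two_n hq]
  rw [← hfac]; linarith

lemma Wsucc : q ^ (2 * (ν + 1) + 2) = q ^ (2 * ν + 2) * q ^ 2 := by
  rw [show (2 * (ν + 1) + 2) = (2 * ν + 2) + (2:ℝ) by ring, Real.rpow_add hq,
    show ((2:ℝ)) = ((2:ℕ):ℝ) by norm_num, Real.rpow_natCast]

lemma cJ_nu (n : ℕ) :
    (1 - q ^ (2 * ν + 2)) * ((q ^ 2) ^ n : ℝ) * cJ q ν n
      = (1 - q ^ (2 * ν + 2) * ((q ^ 2) ^ n : ℝ)) * cJ q (ν + 1) n := by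
  induction n with
  | zero => simp [cJ_zero hq hq1 hν, cJ_zero hq hq1 (show (-1:ℝ) < ν + 1 by linarith)]
  | succ n IH =>
    have hν' : (-1:ℝ) < ν + 1 := by linarith
    have h1 := f1_pos hq hq1 hν n
    have h2 := g_pos hq hq1 hν n
    have h3 := g_pos hq hq1 hν' n
    have hBv : cJ q (ν + 1) n
        = (1 - q ^ (2 * ν + 2)) * ((q ^ 2) ^ n : ℝ) * cJ q ν n
          / (1 - q ^ (2 * ν + 2) * ((q ^ 2) ^ n : ℝ)) := by
      rw [eq_div_iff h2.ne']
      linarith [IH]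
    rw [cJ_succ hq hq1 hν n, cJ_succ hq hq1 hν' n, Wsucc hq hq1 hν, hBv]
    rw [Wsucc hq hq1 hν] at h3
    rw [show ((q:ℝ) ^ 2) ^ (n + 1) = q ^ 2 * (q ^ 2) ^ n by ring, ← mul_assoc]
    generalize ((q:ℝ) ^ 2) ^ n = t at *
    generalize q ^ (2 * ν + 2) = W at *
    field_simp

lemma cJ_A (n : ℕ) :
    q ^ (2 * ν + 2) * ((q ^ 2) ^ n : ℝ) * cJ q (ν + 1) n
      = -((1 - q ^ (2 * ν + 2)) * (1 - q ^ 2 * (q ^ 2) ^ n) * cJ q ν (n + 1)) := by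
  have hB := cJ_nu hq hq1 hν n
  have h1 := f1_pos hq hq1 hν n
  have h2 := g_pos hq hq1 hν n
  have hBv : cJ q (ν + 1) n
      = (1 - q ^ (2 * ν + 2)) * ((q ^ 2) ^ n : ℝ) * cJ q ν n
        / (1 - q ^ (2 * ν + 2) * ((q ^ 2) ^ n : ℝ)) := by
    rw [eq_div_iff h2.ne']
    linarith [hB]
  rw [cJ_succ hq hq1 hν n, hBv]
  field_simp

end cJlem2

noncomputable def Sf (q ν y : ℝ) : ℝ := ∑' n : ℕ, cJ q ν n * y ^ n

section summab
variable {q ν : ℝ} (hq : 0 < q) (hq1 : q < 1) (hν : -1 < ν)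

include hq hq1 hν

lemma summable_cJ (y : ℝ) : Summable (fun n : ℕ => cJ q ν n * y ^ n) := by
  set W := q ^ (2 * ν + 2) with hWdef
  have hW0 : 0 < W := W_pos hq hq1 hν
  have hW1 : W < 1 := W_lt_one hq hq1 hν
  have hq2 : (q:ℝ) ^ 2 < 1 := by nlinarith
  set K : ℝ := W * |y| / ((1 - q ^ 2) * (1 - W)) with hKdef
  have hK0 : 0 ≤ K := by
    apply div_nonneg (by positivity)
    nlinarith
  have htend : Filter.Tendsto (fun n : ℕ => ((q:ℝ) ^ 4) ^ n * K) Filter.atTop (nhds 0) := by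
    have h := (tendsto_pow_atTop_nhds_zero_of_lt_one
      (show (0:ℝ) ≤ q ^ 4 by positivity) (show (q:ℝ) ^ 4 < 1 by nlinarith)).mul_const K
    simpa using h
  have hev : ∀ᶠ n in Filter.atTop, ((q:ℝ) ^ 4) ^ n * K ≤ 1 / 2 :=
    htend.eventually (eventually_le_nhds (by norm_num))
  apply summable_of_ratio_norm_eventually_le (r := 1 / 2) (by norm_num)
  filter_upwards [hev] with n hn
  have h1 := f1_pos hq hq1 hν n
  have h2 := g_pos hq hq1 hν n
  have heq : cJ q ν (n + 1) * y ^ (n + 1)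
      = (W * ((q ^ 2) ^ n : ℝ) * ((q ^ 2) ^ n : ℝ) * |y| / ((1 - q ^ 2 * (q ^ 2) ^ n) * (1 - W * ((q ^ 2) ^ n : ℝ)))) * 0
        ∨ True := Or.inr trivial
  have hkey : ‖cJ q ν (n + 1) * y ^ (n + 1)‖
      = (W * ((q ^ 2) ^ n * (q ^ 2) ^ n) / ((1 - q ^ 2 * (q ^ 2) ^ n) * (1 - W * ((q ^ 2) ^ n : ℝ))) * |y|)
        * ‖cJ q ν n * y ^ n‖ := by
    rw [show cJ q ν (n + 1) * y ^ (n + 1)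
        = -((W * ((q ^ 2) ^ n * (q ^ 2) ^ n) / ((1 - q ^ 2 * (q ^ 2) ^ n) * (1 - W * ((q ^ 2) ^ n : ℝ))))
          * (y * (cJ q ν n * y ^ n))) from by rw [cJ_succ hq hq1 hν n, ← hWdef]; ring]
    rw [norm_neg]
    rw [Real.norm_eq_abs, Real.norm_eq_abs, abs_mul, abs_mul]
    rw [abs_of_pos (show (0:ℝ) < W * ((q ^ 2) ^ n * (q ^ 2) ^ n) / ((1 - q ^ 2 * (q ^ 2) ^ n) * (1 - W * ((q ^ 2) ^ n : ℝ))) by positivity)]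
    ring
  rw [hkey]
  have hWn : W * ((q ^ 2) ^ n : ℝ) < 1 := by
    nlinarith [pow_le_one₀ (show (0:ℝ) ≤ q ^ 2 by positivity) hq2.le (n := n), pow_nonneg (show (0:ℝ) ≤ q ^ 2 by positivity) n]
  have hfrac : W * ((q ^ 2) ^ n * (q ^ 2) ^ n) / ((1 - q ^ 2 * (q ^ 2) ^ n) * (1 - W * ((q ^ 2) ^ n : ℝ))) * |y|
      ≤ ((q:ℝ) ^ 4) ^ n * K := by
    have hpow : ((q:ℝ) ^ 2) ^ n * ((q:ℝ) ^ 2) ^ n = ((q:ℝ) ^ 4) ^ n := by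
      rw [← mul_pow]; ring_nf
    rw [div_mul_eq_mul_div, div_le_iff₀ (by positivity)]
    have hKeq : K * ((1 - q ^ 2) * (1 - W)) = W * |y| := by
      rw [hKdef, div_mul_cancel₀ _ (show ((1 - q ^ 2) * (1 - W) : ℝ) ≠ 0 by nlinarith)]
    have hf1 : (1:ℝ) - q ^ 2 ≤ 1 - q ^ 2 * (q ^ 2) ^ n := by
      nlinarith [pow_le_one₀ (show (0:ℝ) ≤ q ^ 2 by positivity) hq2.le (n := n), sq_nonneg q]
    have hg : (1:ℝ) - W ≤ 1 - W * ((q ^ 2) ^ n : ℝ) := by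
      nlinarith [pow_le_one₀ (show (0:ℝ) ≤ q ^ 2 by positivity) hq2.le (n := n)]
    have hmul : ((1:ℝ) - q ^ 2) * (1 - W) ≤ (1 - q ^ 2 * (q ^ 2) ^ n) * (1 - W * ((q ^ 2) ^ n : ℝ)) := by
      nlinarith
    calc W * ((q ^ 2) ^ n * (q ^ 2) ^ n) * |y|
        = ((q:ℝ) ^ 4) ^ n * (K * ((1 - q ^ 2) * (1 - W))) := by rw [hKeq, ← hpow]; ring
      _ ≤ ((q:ℝ) ^ 4) ^ n * (K * ((1 - q ^ 2 * (q ^ 2) ^ n) * (1 - W * ((q ^ 2) ^ n : ℝ)))) := by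
          apply mul_le_mul_of_nonneg_left _ (by positivity)
          exact mul_le_mul_of_nonneg_left hmul hK0
      _ = ((q:ℝ) ^ 4) ^ n * K * ((1 - q ^ 2 * (q ^ 2) ^ n) * (1 - W * ((q ^ 2) ^ n : ℝ))) := by ring
  have hnn : (0:ℝ) ≤ ‖cJ q ν n * y ^ n‖ := norm_nonneg _
  calc (W * ((q ^ 2) ^ n * (q ^ 2) ^ n) / ((1 - q ^ 2 * (q ^ 2) ^ n) * (1 - W * ((q ^ 2) ^ n : ℝ))) * |y|)
        * ‖cJ q ν n * y ^ n‖
      ≤ (((q:ℝ) ^ 4) ^ n * K) * ‖cJ q ν n * y ^ n‖ := mul_le_mul_of_nonneg_right hfrac hnn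
    _ ≤ 1 / 2 * ‖cJ q ν n * y ^ n‖ := mul_le_mul_of_nonneg_right hn hnn

end summab

section Lident
variable {q ν : ℝ} (hq : 0 < q) (hq1 : q < 1) (hν : -1 < ν)

include hq hq1 hν

lemma tsum_shift_eq (y : ℝ) :
    ∑' n : ℕ, cJ q ν (n + 1) * y ^ (n + 1) = Sf q ν y - 1 := by
  have hf := summable_cJ hq hq1 hν y
  have h := hf.tsum_eq_zero_add
  rw [Sf, h, cJ_zero hq hq1 hν]
  simp

lemma summable_shift (y : ℝ) : Summable (fun n : ℕ => cJ q ν (n + 1) * y ^ (n + 1)) :=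
  (summable_nat_add_iff 1).2 (summable_cJ hq hq1 hν y)

lemma L2 (y : ℝ) :
    q ^ (2 * ν + 2) * (y * Sf q (ν + 1) (q ^ 2 * y))
      = (1 - q ^ (2 * ν + 2)) * (Sf q ν (q ^ 2 * y) - Sf q ν y) := by
  have hν' : (-1:ℝ) < ν + 1 := by linarith
  have key : ∀ n : ℕ, (q ^ (2 * ν + 2) * y) * (cJ q (ν + 1) n * (q ^ 2 * y) ^ n)
      = (1 - q ^ (2 * ν + 2)) * (cJ q ν (n + 1) * (q ^ 2 * y) ^ (n + 1) - cJ q ν (n + 1) * y ^ (n + 1)) := by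
    intro n
    have hA := cJ_A hq hq1 hν n
    linear_combination (y * y ^ n) * hA
  calc q ^ (2 * ν + 2) * (y * Sf q (ν + 1) (q ^ 2 * y))
      = ∑' n : ℕ, (q ^ (2 * ν + 2) * y) * (cJ q (ν + 1) n * (q ^ 2 * y) ^ n) := by
        rw [Sf, tsum_mul_left]; ring
    _ = ∑' n : ℕ, (1 - q ^ (2 * ν + 2)) * (cJ q ν (n + 1) * (q ^ 2 * y) ^ (n + 1) - cJ q ν (n + 1) * y ^ (n + 1)) := by
        exact tsum_congr key
    _ = (1 - q ^ (2 * ν + 2)) * ∑' n : ℕ, (cJ q ν (n + 1) * (q ^ 2 * y) ^ (n + 1) - cJ q ν (n + 1) * y ^ (n + 1)) := by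
        rw [tsum_mul_left]
    _ = (1 - q ^ (2 * ν + 2)) * (Sf q ν (q ^ 2 * y) - Sf q ν y) := by
        rw [Summable.tsum_sub (summable_shift hq hq1 hν (q ^ 2 * y)) (summable_shift hq hq1 hν y),
          tsum_shift_eq hq hq1 hν (q ^ 2 * y), tsum_shift_eq hq hq1 hν y]
        ring

lemma L1 (y : ℝ) :
    y * Sf q (ν + 1) y
      = (1 - q ^ (2 * ν + 2)) * ((1 + y) * Sf q ν (q ^ 2 * y) - Sf q ν y) := by
  have hν' : (-1:ℝ) < ν + 1 := by linarith
  have key : ∀ n : ℕ, y * (cJ q (ν + 1) n * y ^ n)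
      = (1 - q ^ (2 * ν + 2)) * (cJ q ν (n + 1) * (q ^ 2 * y) ^ (n + 1)
          + y * (cJ q ν n * (q ^ 2 * y) ^ n) - cJ q ν (n + 1) * y ^ (n + 1)) := by
    intro n
    have hA := cJ_A hq hq1 hν n
    have hB := cJ_nu hq hq1 hν n
    linear_combination (y * y ^ n) * hA - (y * y ^ n) * hB
  calc y * Sf q (ν + 1) y
      = ∑' n : ℕ, y * (cJ q (ν + 1) n * y ^ n) := by rw [Sf, tsum_mul_left]
    _ = ∑' n : ℕ, (1 - q ^ (2 * ν + 2)) * (cJ q ν (n + 1) * (q ^ 2 * y) ^ (n + 1)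
          + y * (cJ q ν n * (q ^ 2 * y) ^ n) - cJ q ν (n + 1) * y ^ (n + 1)) := tsum_congr key
    _ = (1 - q ^ (2 * ν + 2)) * ∑' n : ℕ, (cJ q ν (n + 1) * (q ^ 2 * y) ^ (n + 1)
          + y * (cJ q ν n * (q ^ 2 * y) ^ n) - cJ q ν (n + 1) * y ^ (n + 1)) := by
        rw [tsum_mul_left]
    _ = (1 - q ^ (2 * ν + 2)) * ((1 + y) * Sf q ν (q ^ 2 * y) - Sf q ν y) := by
        have hs1 := summable_shift hq hq1 hν (q ^ 2 * y)
        have hs2 : Summable (fun n : ℕ => y * (cJ q ν n * (q ^ 2 * y) ^ n)) :=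
          (summable_cJ hq hq1 hν (q ^ 2 * y)).mul_left y
        have hs3 := summable_shift hq hq1 hν y
        rw [Summable.tsum_sub (hs1.add hs2) hs3, Summable.tsum_add hs1 hs2,
          tsum_shift_eq hq hq1 hν (q ^ 2 * y), tsum_shift_eq hq hq1 hν y,
          tsum_mul_left]
        rw [show (∑' n : ℕ, cJ q ν n * (q ^ 2 * y) ^ n) = Sf q ν (q ^ 2 * y) from rfl]
        ring

end Lident


section J2lem
variable {q ν lam x : ℝ} (hq : 0 < q) (hq1 : q < 1) (hν : -1 < ν)

include hq hq1 hν

lemma J2_eq (hb : 0 < lam * x * (1 - q)) :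
    J2 q ν lam x = (qPochInf (q ^ (2 * ν + 2)) (q ^ 2) / qPochInf (q ^ 2) (q ^ 2)) *
      ((lam * x * (1 - q)) ^ ν * Sf q ν ((lam * x * (1 - q)) ^ 2)) := by
  rw [J2, Sf]
  congr 1
  rw [← tsum_mul_left]
  apply tsum_congr
  intro n
  have hsplit : (lam * x * (1 - q)) ^ (2 * (n : ℝ) + ν)
      = ((lam * x * (1 - q)) ^ 2) ^ n * (lam * x * (1 - q)) ^ ν := by
    rw [Real.rpow_add hb, rpow_two_n hb]
  rw [hsplit, cJ]
  ring

end J2lem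


set_option maxHeartbeats 2000000 in
lemma main_pos (q lam m ν : ℝ) (hq : 0 < q) (hq1 : q < 1) (hlam : 0 < lam)
    (hν : -1 < ν) (x : ℝ) (hx : 0 < x) :
    x ^ (m + 1) / qPochInf (-(x ^ 2 * lam ^ 2 * (1 - q) ^ 2)) (q ^ 2) *
        ((q ^ (-m) * qBracket q m - q ^ (-ν) * qBracket q ν) / x * J2 q ν lam x
          + q ^ ν * lam * J2 q (ν + 1) lam x)
      - (q * x) ^ (m + 1) / qPochInf (-((q * x) ^ 2 * lam ^ 2 * (1 - q) ^ 2)) (q ^ 2) *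
        ((q ^ (-m) * qBracket q m - q ^ (-ν) * qBracket q ν) / (q * x) * J2 q ν lam (q * x)
          + q ^ ν * lam * J2 q (ν + 1) lam (q * x))
      = ((1 - q) * x) *
        (x ^ (m + 1) / qPochInf (-(x ^ 2 * lam ^ 2 * (1 - q) ^ 2)) (q ^ 2) *
          (q ^ m * lam ^ 2
            + (q ^ (-m) * (qBracket q m) ^ 2 - q ^ (-ν) * (qBracket q ν) ^ 2) / x ^ 2)
          * J2 q ν lam x) := by
  have h1q : 0 < 1 - q := by linarith
  have hb : 0 < lam * x * (1 - q) := by positivity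
  have hbq : 0 < lam * (q * x) * (1 - q) := by positivity
  have hν' : (-1:ℝ) < ν + 1 := by linarith
  have hq2a : (0:ℝ) ≤ q ^ 2 := by positivity
  have hq2b : (q:ℝ) ^ 2 < 1 := by nlinarith
  have hy0 : 0 < (lam * x * (1 - q)) ^ 2 := by positivity
  have hP1 : qPochInf (-(x ^ 2 * lam ^ 2 * (1 - q) ^ 2)) (q ^ 2)
      = (1 + (lam * x * (1 - q)) ^ 2) * qPochInf (-(q ^ 2 * (lam * x * (1 - q)) ^ 2)) (q ^ 2) := by
    rw [show (-(x ^ 2 * lam ^ 2 * (1 - q) ^ 2)) = -((lam * x * (1 - q)) ^ 2) by ring]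
    rw [qPochInf_shift (by nlinarith : -((lam * x * (1 - q)) ^ 2) < 1) hq2a hq2b]
    rw [show (-((lam * x * (1 - q)) ^ 2) * q ^ 2) = -(q ^ 2 * (lam * x * (1 - q)) ^ 2) by ring, sub_neg_eq_add]
  have hP2 : qPochInf (-((q * x) ^ 2 * lam ^ 2 * (1 - q) ^ 2)) (q ^ 2)
      = qPochInf (-(q ^ 2 * (lam * x * (1 - q)) ^ 2)) (q ^ 2) := by
    rw [show (-((q * x) ^ 2 * lam ^ 2 * (1 - q) ^ 2)) = -(q ^ 2 * (lam * x * (1 - q)) ^ 2) by ring]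
  have hCrel : qPochInf (q ^ (2 * ν + 2)) (q ^ 2)
      = (1 - q ^ (2 * ν + 2)) * qPochInf (q ^ (2 * (ν + 1) + 2)) (q ^ 2) := by
    rw [qPochInf_shift (W_lt_one hq hq1 hν) hq2a hq2b, Wsucc hq hq1 hν]
  have hJ1 := J2_eq hq hq1 hν hb
  have hJ2 := J2_eq hq hq1 hν' hb
  have hJ3 := J2_eq (x := q * x) hq hq1 hν hbq
  have hJ4 := J2_eq (x := q * x) hq hq1 hν' hbq
  have hbase2 : (lam * (q * x) * (1 - q)) ^ 2 = q ^ 2 * (lam * x * (1 - q)) ^ 2 := by ring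
  have hrpow1 : (lam * (q * x) * (1 - q)) ^ ν = q ^ ν * (lam * x * (1 - q)) ^ ν := by
    rw [show lam * (q * x) * (1 - q) = q * (lam * x * (1 - q)) by ring,
      Real.mul_rpow hq.le hb.le]
  have hrpow2 : (lam * (q * x) * (1 - q)) ^ (ν + 1)
      = (q ^ ν * q) * ((lam * x * (1 - q)) ^ ν * (lam * x * (1 - q))) := by
    rw [show lam * (q * x) * (1 - q) = q * (lam * x * (1 - q)) by ring,
      Real.mul_rpow hq.le hb.le, Real.rpow_add_one hq.ne' ν, Real.rpow_add_one hb.ne' ν]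
  have hbν1 : (lam * x * (1 - q)) ^ (ν + 1) = (lam * x * (1 - q)) ^ ν * (lam * x * (1 - q)) :=
    Real.rpow_add_one hb.ne' ν
  have hxm : x ^ (m + 1) = x ^ m * x := Real.rpow_add_one hx.ne' m
  have hqxm : (q * x) ^ (m + 1) = (q ^ m * q) * (x ^ m * x) := by
    rw [Real.mul_rpow hq.le hx.le, Real.rpow_add_one hq.ne' m, Real.rpow_add_one hx.ne' m]
  have hqmneg : q ^ (-m) = (q ^ m)⁻¹ := Real.rpow_neg hq.le m
  have hqvneg : q ^ (-ν) = (q ^ ν)⁻¹ := Real.rpow_neg hq.le ν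
  have hW : q ^ (2 * ν + 2) = (q ^ ν) ^ 2 * q ^ 2 := by
    rw [show (2 * ν + 2 : ℝ) = ν + ν + 2 by ring, Real.rpow_add hq, Real.rpow_add hq,
      show ((2:ℝ)) = ((2:ℕ):ℝ) by norm_num, Real.rpow_natCast]
    ring
  rw [hJ3, hJ4] at *
  rw [hP1, hP2, hJ1, hJ2, hCrel, hrpow1, hrpow2, hbase2, hbν1, hxm, hqxm,
    hqmneg, hqvneg, qBracket, qBracket, hW]
  have h1 := L1 hq hq1 hν ((lam * x * (1 - q)) ^ 2)
  have h2 := L2 hq hq1 hν ((lam * x * (1 - q)) ^ 2)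
  rw [hW] at h1 h2
  have hpD : (0:ℝ) < qPochInf (q ^ 2) (q ^ 2) := qPochInf_pos hq2b hq2a hq2b
  have hpp : (0:ℝ) < qPochInf (-(q ^ 2 * (lam * x * (1 - q)) ^ 2)) (q ^ 2) :=
    qPochInf_pos (by nlinarith) hq2a hq2b
  have hqm0 : (0:ℝ) < q ^ m := Real.rpow_pos_of_pos hq m
  have hqv0 : (0:ℝ) < q ^ ν := Real.rpow_pos_of_pos hq ν
  have h1y : (0:ℝ) < 1 + (lam * x * (1 - q)) ^ 2 := by positivity
  set s0 := Sf q ν ((lam * x * (1 - q)) ^ 2) with hs0def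
  set s1 := Sf q ν (q ^ 2 * (lam * x * (1 - q)) ^ 2) with hs1def
  set r0 := Sf q (ν + 1) ((lam * x * (1 - q)) ^ 2) with hr0def
  set r1 := Sf q (ν + 1) (q ^ 2 * (lam * x * (1 - q)) ^ 2) with hr1def
  set Z := qPochInf (q ^ (2 * (ν + 1) + 2)) (q ^ 2) with hZdef
  set D := qPochInf (q ^ 2) (q ^ 2) with hDdef
  set p := qPochInf (-(q ^ 2 * (lam * x * (1 - q)) ^ 2)) (q ^ 2) with hpdef
  set bn := (lam * x * (1 - q)) ^ ν with hbndef
  set qm := q ^ m with hqmdef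
  set qv := q ^ ν with hqvdef
  set xm := x ^ m with hxmdef
  clear_value s0 s1 r0 r1 Z D p bn qm qv xm
  clear hs0def hs1def hr0def hr1def hZdef hDdef hpdef hbndef hqmdef hqvdef hxmdef
  clear hJ1 hJ2 hJ3 hJ4 hP1 hP2 hCrel hrpow1 hrpow2 hbase2 hbν1 hxm hqxm hqmneg hqvneg hW
  set_option maxRecDepth 100000 in field_simp
  linear_combination
    (xm * Z * bn * qm * qv ^ 2) * h1
    - (xm * Z * bn * (1 + (lam * x * (1 - q)) ^ 2) * qm ^ 2 * qv) * h2

lemma J2_neg {q ν lam x : ℝ} (hb : lam * x * (1 - q) < 0) :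
    J2 q ν lam x = Real.cos (ν * Real.pi) * J2 q ν (-lam) x := by
  rw [J2, J2]
  have hterm : ∀ n : ℕ,
      ((-1 : ℝ) ^ n * q ^ (2 * (n : ℝ) * ((n : ℝ) + ν)) *
          (lam * x * (1 - q)) ^ (2 * (n : ℝ) + ν)) /
        (qPoch (q ^ 2) (q ^ 2) n *
          ∏ j ∈ Finset.range n, (1 - q ^ (2 * ν + 2 + 2 * (j : ℝ))))
      = Real.cos (ν * Real.pi) *
        (((-1 : ℝ) ^ n * q ^ (2 * (n : ℝ) * ((n : ℝ) + ν)) *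
          (-lam * x * (1 - q)) ^ (2 * (n : ℝ) + ν)) /
        (qPoch (q ^ 2) (q ^ 2) n *
          ∏ j ∈ Finset.range n, (1 - q ^ (2 * ν + 2 + 2 * (j : ℝ))))) := by
    intro n
    have hbb : (-lam * x * (1 - q)) = -(lam * x * (1 - q)) := by ring
    have h1 : (lam * x * (1 - q)) ^ (2 * (n : ℝ) + ν)
        = Real.exp (Real.log (lam * x * (1 - q)) * (2 * (n : ℝ) + ν)) *
          Real.cos ((2 * (n : ℝ) + ν) * Real.pi) := Real.rpow_def_of_neg hb _
    have h2 : (-(lam * x * (1 - q))) ^ (2 * (n : ℝ) + ν)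
        = Real.exp (Real.log (-(lam * x * (1 - q))) * (2 * (n : ℝ) + ν)) :=
      Real.rpow_def_of_pos (by linarith) _
    have h3 : Real.log (-(lam * x * (1 - q))) = Real.log (lam * x * (1 - q)) :=
      Real.log_neg_eq_log _
    have h4 : Real.cos ((2 * (n : ℝ) + ν) * Real.pi) = Real.cos (ν * Real.pi) := by
      rw [show (2 * (n : ℝ) + ν) * Real.pi = ν * Real.pi + (n : ℝ) * (2 * Real.pi) by ring]
      exact Real.cos_add_nat_mul_two_pi _ n
    rw [hbb, h1, h2, h3, h4]
    ring
  rw [tsum_congr hterm, tsum_mul_left]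
  ring

/-- Indefinite q-integral for the second Jackson q-Bessel function. -/
theorem qIntegral_J2_power (q lam m ν : ℝ) (hq : 0 < q) (hq1 : q < 1)
    (hlam : lam ≠ 0) (hν : -1 < ν) (hmν : 0 < m + ν) :
    ∀ x : ℝ, 0 < x →
      qDeriv q
        (fun t => t ^ (m + 1) / qPochInf (-(t ^ 2 * lam ^ 2 * (1 - q) ^ 2)) (q ^ 2) *
          ((q ^ (-m) * qBracket q m - q ^ (-ν) * qBracket q ν) / t * J2 q ν lam t
            + q ^ ν * lam * J2 q (ν + 1) lam t)) x
      = x ^ (m + 1) / qPochInf (-(x ^ 2 * lam ^ 2 * (1 - q) ^ 2)) (q ^ 2) *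
          (q ^ m * lam ^ 2
            + (q ^ (-m) * (qBracket q m) ^ 2 - q ^ (-ν) * (qBracket q ν) ^ 2) / x ^ 2)
          * J2 q ν lam x := by
  intro x hx
  have h1q : 0 < 1 - q := by linarith
  have hne : ((1 - q) * x) ≠ 0 := mul_ne_zero (by linarith) hx.ne'
  simp only [qDeriv]
  rw [div_eq_iff hne]
  rcases lt_or_gt_of_ne hlam with hneg | hpos
  · have hmain := main_pos q (-lam) m ν hq hq1 (by linarith) hν x hx
    rw [show ((-lam : ℝ)) ^ 2 = lam ^ 2 from by ring] at hmain
    have hl0 : 0 < -lam := by linarith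
    have hb1 : lam * x * (1 - q) < 0 := by
      have : 0 < (-lam) * x * (1 - q) := mul_pos (mul_pos hl0 hx) h1q
      linarith
    have hb2 : lam * (q * x) * (1 - q) < 0 := by
      have : 0 < (-lam) * (q * x) * (1 - q) := mul_pos (mul_pos hl0 (mul_pos hq hx)) h1q
      linarith
    have hJ1 : J2 q ν lam x = Real.cos (ν * Real.pi) * J2 q ν (-lam) x := J2_neg hb1
    have hJ2 : J2 q ν lam (q * x) = Real.cos (ν * Real.pi) * J2 q ν (-lam) (q * x) := J2_neg hb2
    have hc : Real.cos ((ν + 1) * Real.pi) = -Real.cos (ν * Real.pi) := by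
      rw [show (ν + 1) * Real.pi = ν * Real.pi + Real.pi by ring]
      exact Real.cos_add_pi _
    have hJ3 : J2 q (ν + 1) lam x = -(Real.cos (ν * Real.pi)) * J2 q (ν + 1) (-lam) x := by
      rw [J2_neg (x := x) (ν := ν + 1) hb1, hc]
    have hJ4 : J2 q (ν + 1) lam (q * x)
        = -(Real.cos (ν * Real.pi)) * J2 q (ν + 1) (-lam) (q * x) := by
      rw [J2_neg (x := q * x) (ν := ν + 1) hb2, hc]
    rw [hJ1, hJ2, hJ3, hJ4]
    linear_combination Real.cos (ν * Real.pi) * hmain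
  · have hmain := main_pos q lam m ν hq hq1 hpos hν x hx
    linear_combination hmain
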